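/- Let p be an odd prime and m ≥ 2. For every a ∈ F_{p^m} not lying in the prime subfield F_p, the codeword c(a) of C_{D(0)} has constant composition: for every β ∈ F_p with β ≠ 0, the number of d ∈ D(0) with Tr(a·d) = β equals p^{m-2}, and the number of d ∈ D(0) with Tr(a·d) = 0 equals p^{m-2} - 1. -/

import Mathlib

/-- Let `p` be an odd prime and `m ≥ 2`. For every `a ∈ F_{p^m}` not in the prime subfield,
the codeword `c(a)` of `C_{D(0)}` has constant composition: every nonzero `β ∈ F_p` occurs
exactly `p^(m-2)` times and `0` occurs exactly `p^(m-2) - 1` times. -/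
theorem composition_CD0
    (p : ℕ) [Fact p.Prime] (hp2 : p ≠ 2) (m : ℕ) (hm : 2 ≤ m)
    (F : Type*) [Field F] [Fintype F] [DecidableEq F] [Algebra (ZMod p) F]
    (hcard : Fintype.card F = p ^ m)
    (a : F) (ha : a ∉ Set.range (algebraMap (ZMod p) F)) :
    (∀ β : ZMod p, β ≠ 0 →
      (Finset.univ.filter fun d : F =>
          (d ≠ 0 ∧ Algebra.trace (ZMod p) F d = 0) ∧
            Algebra.trace (ZMod p) F (a * d) = β).card = p ^ (m - 2)) ∧
    (Finset.univ.filter fun d : F =>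
        (d ≠ 0 ∧ Algebra.trace (ZMod p) F d = 0) ∧
          Algebra.trace (ZMod p) F (a * d) = 0).card = p ^ (m - 2) - 1 := by
  classical
  have hp : p.Prime := Fact.out
  set T := Algebra.trace (ZMod p) F with hT
  let L : F →ₗ[ZMod p] ZMod p × ZMod p :=
    LinearMap.prod T (T ∘ₗ LinearMap.mulLeft (ZMod p) a)
  have hL : ∀ d, L d = (T d, T (a * d)) := fun d => rfl
  -- surjectivity of L
  have hsurj : Function.Surjective L := by
    rw [← LinearMap.range_eq_top]
    by_contra h
    obtain ⟨f, hf0, hf⟩ := Submodule.exists_dual_map_eq_bot_of_lt_top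
      (lt_top_iff_ne_top.mpr h) inferInstance
    set c₁ := f (1, 0) with hc₁
    set c₂ := f (0, 1) with hc₂
    have hfv : ∀ v : ZMod p × ZMod p, f v = v.1 * c₁ + v.2 * c₂ := by
      intro v
      have hv : v = v.1 • ((1 : ZMod p), (0 : ZMod p)) + v.2 • (0, 1) := by
        simp [Prod.ext_iff]
      rw [hv, map_add, map_smul, map_smul, ← hv]
      simp [smul_eq_mul, hc₁, hc₂]
    have hzero : ∀ d : F, f (L d) = 0 := by
      intro d
      have h1 : L d ∈ LinearMap.range L := ⟨d, rfl⟩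
      have h2 : f (L d) ∈ (LinearMap.range L).map f := Submodule.mem_map_of_mem h1
      rw [hf, Submodule.mem_bot] at h2
      exact h2
    have key : ∀ d : F,
        T ((algebraMap (ZMod p) F c₁ + algebraMap (ZMod p) F c₂ * a) * d) = 0 := by
      intro d
      have := hzero d
      rw [hL, hfv] at this
      have e1 : T d * c₁ = T (algebraMap (ZMod p) F c₁ * d) := by
        rw [mul_comm, ← Algebra.smul_def, map_smul, smul_eq_mul]
      have e2 : T (a * d) * c₂ = T (algebraMap (ZMod p) F c₂ * (a * d)) := by
        rw [mul_comm, ← Algebra.smul_def, map_smul, smul_eq_mul]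
      rw [e1, e2] at this
      calc T ((algebraMap (ZMod p) F c₁ + algebraMap (ZMod p) F c₂ * a) * d)
          = T (algebraMap (ZMod p) F c₁ * d) + T (algebraMap (ZMod p) F c₂ * (a * d)) := by
            rw [← map_add]; ring_nf
        _ = 0 := this
    have hnd := traceForm_nondegenerate (ZMod p) F
    have hx : algebraMap (ZMod p) F c₁ + algebraMap (ZMod p) F c₂ * a = 0 := by
      apply hnd.1
      intro y
      rw [Algebra.traceForm_apply]
      exact key y
    rcases eq_or_ne c₂ 0 with h2 | h2
    · have h1 : c₁ = 0 := by
        have : algebraMap (ZMod p) F c₁ = 0 := by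
          simpa [h2] using hx
        exact (map_eq_zero_iff _ (algebraMap (ZMod p) F).injective).mp this
      exact hf0 (LinearMap.ext fun v => by simp [hfv, h1, h2])
    · apply ha
      refine ⟨-c₁ / c₂, ?_⟩
      have hc2 : algebraMap (ZMod p) F c₂ ≠ 0 := by
        simpa using (map_ne_zero_iff _ (algebraMap (ZMod p) F).injective).mpr h2
      field_simp
      rw [map_neg, map_div₀, neg_div', div_eq_iff hc2]
      linear_combination -hx
  -- finrank facts
  have hfr : Module.finrank (ZMod p) F = m := by
    have := Module.card_eq_pow_finrank (K := ZMod p) (V := F)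
    rw [ZMod.card, hcard] at this
    exact (Nat.pow_right_injective hp.two_le this.symm)
  have hrank2 : Module.finrank (ZMod p) (ZMod p × ZMod p) = 2 := by
    simp
  have hker_fr : Module.finrank (ZMod p) (LinearMap.ker L) = m - 2 := by
    have hrn := LinearMap.finrank_range_add_finrank_ker L
    rw [LinearMap.range_eq_top.mpr hsurj, finrank_top, hrank2, hfr] at hrn
    omega
  have hkercard : Fintype.card (LinearMap.ker L) = p ^ (m - 2) := by
    rw [Module.card_eq_pow_finrank (K := ZMod p) (V := LinearMap.ker L), ZMod.card, hker_fr]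
  -- fiber count
  have hfiber0 : (Finset.univ.filter fun d : F => L d = 0).card = p ^ (m - 2) := by
    rw [← hkercard]
    rw [Fintype.card_subtype]  -- hope: card ker = filter (· ∈ ker) card
    congr 1
    apply Finset.filter_congr
    intro d _
    simp [LinearMap.mem_ker]
  have hfiber : ∀ v : ZMod p × ZMod p,
      (Finset.univ.filter fun d : F => L d = v).card = p ^ (m - 2) := by
    intro v
    obtain ⟨d₀, hd₀⟩ := hsurj v
    rw [← hfiber0]
    apply Finset.card_bij' (fun d _ => d - d₀) (fun d _ => d + d₀)
    · intro d hd
      simp only [Finset.mem_filter, Finset.mem_univ, true_and] at hd ⊢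
      rw [map_sub, hd, hd₀, sub_self]
    · intro d hd
      simp only [Finset.mem_filter, Finset.mem_univ, true_and] at hd ⊢
      rw [map_add, hd, hd₀, zero_add]
    · intro d _; ring
    · intro d _; ring
  constructor
  · intro β hβ
    have : (Finset.univ.filter fun d : F =>
        (d ≠ 0 ∧ T d = 0) ∧ T (a * d) = β)
        = Finset.univ.filter fun d : F => L d = (0, β) := by
      ext d
      simp only [Finset.mem_filter, Finset.mem_univ, true_and, hL, Prod.ext_iff]
      constructor
      · rintro ⟨⟨-, h1⟩, h2⟩; exact ⟨h1, h2⟩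
      · rintro ⟨h1, h2⟩
        refine ⟨⟨?_, h1⟩, h2⟩
        rintro rfl
        rw [mul_zero, map_zero] at h2
        exact hβ h2.symm
    rw [this, hfiber]
  · have heq : (Finset.univ.filter fun d : F =>
        (d ≠ 0 ∧ T d = 0) ∧ T (a * d) = 0)
        = (Finset.univ.filter fun d : F => L d = 0).erase 0 := by
      ext d
      simp only [Finset.mem_erase, Finset.mem_filter, Finset.mem_univ, true_and, hL,
        Prod.ext_iff, Prod.fst_zero, Prod.snd_zero]
      tauto
    rw [heq, Finset.card_erase_of_mem, hfiber0]
    simp [hL]
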